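/- Let γ(x) = x^α L(x) on (0,x₀) where α ∈ (0,1] and L(x) = c·exp(∫_x^{x₀} ε(t)/t dt) with ε continuous, bounded, and ε(t)→0 as t→0 (normalized slowly varying). Then there exist constants c₈>0 and x₁ ∈ (0,1) such that ∫_0^{1/2} γ(xy)/(y√(log(1/y))) dy ≤ c₈ γ(x) for all x ∈ (0,x₁]. -/

import Mathlib

open Filter Topology Set MeasureTheory intervalIntegral

section Aux

variable {x₀ M : ℝ} {ε : ℝ → ℝ}

/-- Integrability of `ε t / t` on `[a, b] ⊆ (0, x₀]` for bounded `ε` continuous on `(0, x₀)`. -/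
lemma aux_integrableOn (hεc : ContinuousOn ε (Set.Ioo (0:ℝ) x₀))
    (hεb : ∀ t ∈ Set.Ioo (0:ℝ) x₀, |ε t| ≤ M)
    {a b : ℝ} (ha : 0 < a) (hb : b ≤ x₀) (hab : a ≤ b) :
    IntegrableOn (fun t => ε t / t) (Set.Ioo a b) := by
  have hsub : Set.Ioo a b ⊆ Set.Ioo (0:ℝ) x₀ := fun t ht =>
    ⟨lt_trans ha ht.1, lt_of_lt_of_le ht.2 hb⟩
  have hcont : ContinuousOn (fun t => ε t / t) (Set.Ioo a b) := by
    apply ContinuousOn.div (hεc.mono hsub) continuousOn_id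
    intro t ht
    exact ne_of_gt (lt_trans ha ht.1)
  refine Integrable.mono' (integrable_const (M / a)) ?_ ?_
  · exact hcont.aestronglyMeasurable measurableSet_Ioo
  · rw [ae_restrict_iff' measurableSet_Ioo]
    filter_upwards with t ht
    have ht0 : 0 < t := lt_trans ha ht.1
    rw [Real.norm_eq_abs, abs_div, abs_of_pos ht0]
    exact div_le_div₀ (le_trans (abs_nonneg _) (hεb t (hsub ht))) (hεb t (hsub ht))
      ha ht.1.le

lemma aux_intervalIntegrable (hεc : ContinuousOn ε (Set.Ioo (0:ℝ) x₀))
    (hεb : ∀ t ∈ Set.Ioo (0:ℝ) x₀, |ε t| ≤ M)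
    {a b : ℝ} (ha : 0 < a) (hb : b ≤ x₀) (hab : a ≤ b) :
    IntervalIntegrable (fun t => ε t / t) volume a b := by
  rw [intervalIntegrable_iff_integrableOn_Ioc_of_le hab]
  have : volume.restrict (Set.Ioc a b) = volume.restrict (Set.Ioo a b) :=
    (Measure.restrict_congr_set Ioo_ae_eq_Ioc).symm
  unfold IntegrableOn
  rw [this]
  exact aux_integrableOn hεc hεb ha hb hab

lemma aux_integrableOn_Icc (hεc : ContinuousOn ε (Set.Ioo (0:ℝ) x₀))
    (hεb : ∀ t ∈ Set.Ioo (0:ℝ) x₀, |ε t| ≤ M)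
    {a b : ℝ} (ha : 0 < a) (hb : b ≤ x₀) (hab : a ≤ b) :
    IntegrableOn (fun t => ε t / t) (Set.Icc a b) := by
  have : volume.restrict (Set.Icc a b) = volume.restrict (Set.Ioo a b) :=
    (Measure.restrict_congr_set Ioo_ae_eq_Icc).symm
  unfold IntegrableOn
  rw [this]
  exact aux_integrableOn hεc hεb ha hb hab

/-- Continuity of `u ↦ ∫_u^{x₀} ε t / t dt` at interior points. -/
lemma aux_continuousAt (hεc : ContinuousOn ε (Set.Ioo (0:ℝ) x₀))
    (hεb : ∀ t ∈ Set.Ioo (0:ℝ) x₀, |ε t| ≤ M)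
    {u : ℝ} (hu : u ∈ Set.Ioo (0:ℝ) x₀) :
    ContinuousAt (fun v => ∫ t in v..x₀, ε t / t) u := by
  have h2 : u / 2 < u := by linarith [hu.1]
  have hconts : ContinuousOn (fun v => ∫ t in v..x₀, ε t / t) (Set.Icc (u/2) x₀) := by
    have hint : IntegrableOn (fun t => ε t / t) (Set.uIcc (u/2) x₀) := by
      rw [Set.uIcc_of_le (by linarith [hu.2] : u/2 ≤ x₀)]
      exact aux_integrableOn_Icc hεc hεb (by linarith [hu.1]) le_rfl (by linarith [hu.2])
    have := continuousOn_primitive_interval_left (μ := volume) hint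
    rwa [Set.uIcc_of_le (by linarith [hu.2] : u/2 ≤ x₀)] at this
  exact hconts.continuousAt (Icc_mem_nhds h2 hu.2)

end Aux

set_option maxHeartbeats 1000000 in
/-- A regularly varying function `γ(x) = x^α L(x)` of index `α ∈ (0,1]`, with `L` normalized
slowly varying, satisfies condition (C₀):
`∫_0^{1/2} γ(xy)/(y √(log(1/y))) dy ≤ c₈ γ(x)` for all small `x`. -/
theorem stmt3 (α c x₀ : ℝ) (hα : 0 < α) (hα1 : α ≤ 1)
    (hx₀ : x₀ ∈ Set.Ioo (0:ℝ) 1) (hc : 0 < c)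
    (ε : ℝ → ℝ)
    (hεc : ContinuousOn ε (Set.Ioo (0:ℝ) x₀))
    (hεb : ∃ M : ℝ, ∀ t ∈ Set.Ioo (0:ℝ) x₀, |ε t| ≤ M)
    (hε0 : Tendsto ε (𝓝[>] (0:ℝ)) (𝓝 0))
    (γ : ℝ → ℝ)
    (hγ : ∀ x ∈ Set.Ioo (0:ℝ) x₀,
      γ x = x ^ α * (c * Real.exp (∫ t in x..x₀, ε t / t))) :
    ∃ c₈ > 0, ∃ x₁ ∈ Set.Ioo (0:ℝ) 1, ∀ x ∈ Set.Ioc (0:ℝ) x₁,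
      (∫ y in (0:ℝ)..(1/2), γ (x * y) / (y * Real.sqrt (Real.log (1/y))))
        ≤ c₈ * γ x := by
  obtain ⟨M, hM⟩ := hεb
  obtain ⟨hx₀0, hx₀1⟩ := hx₀
  -- small-ε region
  have hsmall : ∃ δ > 0, ∀ t ∈ Set.Ioo (0:ℝ) δ, |ε t| ≤ α / 2 := by
    have h := Metric.tendsto_nhds.mp hε0 (α/2) (by positivity)
    rw [eventually_nhdsWithin_iff] at h
    obtain ⟨u, hu, hu'⟩ := Metric.eventually_nhds_iff.mp h
    refine ⟨u, hu, fun t ht => ?_⟩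
    have := hu' (by rw [Real.dist_eq, sub_zero, abs_of_pos ht.1]; exact ht.2) ht.1
    rw [Real.dist_eq, sub_zero] at this
    exact this.le
  obtain ⟨δ, hδ0, hδ⟩ := hsmall
  set x₁ : ℝ := min (δ/2) (x₀/2) with hx₁def
  have hx₁0 : 0 < x₁ := lt_min (by linarith) (by linarith)
  have hx₁δ : x₁ < δ := lt_of_le_of_lt (min_le_left _ _) (by linarith)
  have hx₁x₀ : x₁ < x₀ := lt_of_le_of_lt (min_le_right _ _) (by linarith)
  have hx₁1 : x₁ < 1 := lt_trans hx₁x₀ hx₀1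
  -- constants
  have hlog2 : (0:ℝ) < Real.log 2 := Real.log_pos (by norm_num)
  have hsqlog2 : (0:ℝ) < Real.sqrt (Real.log 2) := Real.sqrt_pos.mpr hlog2
  set I : ℝ := ∫ y in (0:ℝ)..(1/2), y ^ (α/2 - 1) with hI
  have hIval : I = ((1/2:ℝ) ^ (α/2)) / (α/2) := by
    rw [hI, integral_rpow (Or.inl (by linarith))]
    rw [Real.zero_rpow (show α/2 - 1 + 1 ≠ 0 by rw [sub_add_cancel]; positivity)]
    norm_num
  have hIpos : 0 < I := by
    rw [hIval]; positivity
  refine ⟨I / Real.sqrt (Real.log 2), by positivity, x₁, ⟨hx₁0, hx₁1⟩, ?_⟩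
  rintro x ⟨hx0, hxx₁⟩
  have hxx₀ : x < x₀ := lt_of_le_of_lt hxx₁ hx₁x₀
  -- shorthand for the slowly varying part
  set F : ℝ → ℝ := fun u => ∫ t in u..x₀, ε t / t with hF
  have hγx : γ x = x ^ α * (c * Real.exp (F x)) := hγ x ⟨hx0, hxx₀⟩
  have hγxpos : 0 < γ x := by rw [hγx]; positivity
  -- pointwise bound on Ioc 0 (1/2)
  have key : ∀ y ∈ Set.Ioc (0:ℝ) (1/2), γ (x * y) ≤ γ x * y ^ (α/2) := by
    rintro y ⟨hy0, hy2⟩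
    have hxy0 : 0 < x * y := mul_pos hx0 hy0
    have hxyx : x * y < x := by
      nlinarith
    have hγxy : γ (x * y) = (x*y) ^ α * (c * Real.exp (F (x*y))) :=
      hγ (x*y) ⟨hxy0, lt_trans hxyx hxx₀⟩
    -- split the integral
    have hint1 : IntervalIntegrable (fun t => ε t / t) volume (x*y) x :=
      aux_intervalIntegrable hεc hM hxy0 (le_of_lt hxx₀) hxyx.le
    have hint2 : IntervalIntegrable (fun t => ε t / t) volume x x₀ :=
      aux_intervalIntegrable hεc hM hx0 le_rfl hxx₀.le
    have hsplit : F (x*y) = (∫ t in (x*y)..x, ε t / t) + F x :=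
      (integral_add_adjacent_intervals hint1 hint2).symm
    -- bound the middle integral
    have hmid : (∫ t in (x*y)..x, ε t / t) ≤ (α/2) * Real.log (1/y) := by
      have hle : (∫ t in (x*y)..x, ε t / t) ≤ ∫ t in (x*y)..x, (α/2) * (1/t) := by
        apply integral_mono_on hxyx.le hint1
        · apply ContinuousOn.intervalIntegrable
          apply continuousOn_const.mul
          apply ContinuousOn.div continuousOn_const continuousOn_id
          intro t ht
          rw [Set.uIcc_of_le hxyx.le] at ht
          exact ne_of_gt (lt_of_lt_of_le hxy0 ht.1)
        · intro t ht
          have ht0 : 0 < t := lt_of_lt_of_le hxy0 ht.1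
          have htδ : t < δ := lt_of_le_of_lt ht.2 (lt_of_le_of_lt hxx₁ hx₁δ)
          calc ε t / t ≤ (α/2) / t :=
                (div_le_div_iff_of_pos_right ht0).mpr ((le_abs_self _).trans (hδ t ⟨ht0, htδ⟩))
          _ = (α/2) * (1/t) := by ring
      rw [intervalIntegral.integral_const_mul, integral_one_div
        (by rw [Set.uIcc_of_le hxyx.le]; intro h; exact absurd h.1 (not_le.mpr hxy0))] at hle
      have : x / (x * y) = 1 / y := by field_simp
      rwa [this] at hle
    -- conclude
    have hexp : Real.exp (F (x*y)) ≤ y ^ (-(α/2)) * Real.exp (F x) := by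
      rw [hsplit, Real.exp_add]
      apply mul_le_mul_of_nonneg_right _ (Real.exp_nonneg _)
      rw [← Real.exp_log (show (0:ℝ) < y ^ (-(α/2)) by positivity),
        Real.exp_le_exp, Real.log_rpow hy0]
      calc (∫ t in (x*y)..x, ε t / t) ≤ (α/2) * Real.log (1/y) := hmid
        _ = -(α/2) * Real.log y := by
            rw [one_div, Real.log_inv]; ring
    calc γ (x * y) = (x*y) ^ α * (c * Real.exp (F (x*y))) := hγxy
      _ = x ^ α * y ^ α * (c * Real.exp (F (x*y))) := by
          rw [Real.mul_rpow hx0.le hy0.le]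
      _ ≤ x ^ α * y ^ α * (c * (y ^ (-(α/2)) * Real.exp (F x))) := by
          apply mul_le_mul_of_nonneg_left _ (by positivity)
          exact mul_le_mul_of_nonneg_left hexp hc.le
      _ = (x ^ α * (c * Real.exp (F x))) * (y ^ α * y ^ (-(α/2))) := by ring
      _ = γ x * y ^ (α/2) := by
          rw [← Real.rpow_add hy0, show α + -(α/2) = α/2 by ring, hγx]
  -- pointwise bound on the integrand
  set f : ℝ → ℝ := fun y => γ (x * y) / (y * Real.sqrt (Real.log (1/y))) with hf
  set g : ℝ → ℝ := fun y => (γ x / Real.sqrt (Real.log 2)) * y ^ (α/2 - 1) with hg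
  have hbound : ∀ y ∈ Set.Ioc (0:ℝ) (1/2), f y ≤ g y := by
    rintro y ⟨hy0, hy2⟩
    have hlogy : Real.log 2 ≤ Real.log (1/y) := by
      apply Real.log_le_log (by norm_num)
      rw [le_one_div (by norm_num) hy0]; exact hy2
    have hden : 0 < y * Real.sqrt (Real.log (1/y)) :=
      mul_pos hy0 (Real.sqrt_pos.mpr (lt_of_lt_of_le hlog2 hlogy))
    have hγxynn : 0 ≤ γ (x * y) := by
      rw [hγ (x*y) ⟨mul_pos hx0 hy0, by nlinarith⟩]; positivity
    calc f y ≤ (γ x * y ^ (α/2)) / (y * Real.sqrt (Real.log (1/y))) :=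
          (div_le_div_iff_of_pos_right hden).mpr (key y ⟨hy0, hy2⟩)
      _ ≤ (γ x * y ^ (α/2)) / (y * Real.sqrt (Real.log 2)) := by
          apply div_le_div_of_nonneg_left (by positivity)
            (mul_pos hy0 hsqlog2)
          exact mul_le_mul_of_nonneg_left (Real.sqrt_le_sqrt hlogy) hy0.le
      _ = g y := by
          simp only [hg]
          rw [show α/2 - 1 = α/2 + (-1) by ring, Real.rpow_add hy0,
            Real.rpow_neg_one]
          field_simp
  -- integrability of g
  have hgint : IntervalIntegrable g volume 0 (1/2) :=
    (intervalIntegrable_rpow' (by linarith : (-1:ℝ) < α/2 - 1)).const_mul _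
  -- measurability / integrability of f
  have hfmeas : ContinuousOn f (Set.Ioc (0:ℝ) (1/2)) := by
    have hG : ContinuousOn (fun y => (x*y) ^ α * (c * Real.exp (F (x*y))) /
        (y * Real.sqrt (Real.log (1/y)))) (Set.Ioc (0:ℝ) (1/2)) := by
      apply ContinuousOn.div
      · apply ContinuousOn.mul
        · apply ContinuousOn.rpow_const
          · exact (continuous_const.mul continuous_id).continuousOn
          · rintro y ⟨hy0, _⟩
            exact Or.inl (ne_of_gt (mul_pos hx0 hy0))
        · apply continuousOn_const.mul
          apply Real.continuous_exp.comp_continuousOn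
          intro y hy
          have hxy : x * y ∈ Set.Ioo (0:ℝ) x₀ :=
            ⟨mul_pos hx0 hy.1, by nlinarith [hy.2, hy.1]⟩
          exact ((aux_continuousAt hεc hM hxy).comp
            ((continuous_const.mul continuous_id).continuousAt)).continuousWithinAt
      · apply ContinuousOn.mul continuousOn_id
        apply Real.continuous_sqrt.comp_continuousOn
        apply Real.continuousOn_log.comp
        · apply ContinuousOn.div continuousOn_const continuousOn_id
          rintro y ⟨hy0, _⟩; exact ne_of_gt hy0
        · rintro y ⟨hy0, _⟩
          simp only [Set.mem_compl_iff, Set.mem_singleton_iff]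
          positivity
      · rintro y ⟨hy0, hy2⟩
        have hlogy : Real.log 2 ≤ Real.log (1/y) := by
          apply Real.log_le_log (by norm_num)
          rw [le_one_div (by norm_num) hy0]; exact hy2
        have : 0 < y * Real.sqrt (Real.log (1/y)) :=
          mul_pos hy0 (Real.sqrt_pos.mpr (lt_of_lt_of_le hlog2 hlogy))
        exact ne_of_gt this
    apply hG.congr
    rintro y ⟨hy0, hy2⟩
    rw [hf]
    simp only
    rw [hγ (x*y) ⟨mul_pos hx0 hy0, by nlinarith⟩]
  have hfint : IntervalIntegrable f volume 0 (1/2) := by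
    rw [intervalIntegrable_iff_integrableOn_Ioc_of_le (by norm_num)]
    refine Integrable.mono'
      ((intervalIntegrable_iff_integrableOn_Ioc_of_le (by norm_num)).mp hgint)
      (hfmeas.aestronglyMeasurable measurableSet_Ioc) ?_
    rw [ae_restrict_iff' measurableSet_Ioc]
    filter_upwards with y hy
    have hy0 := hy.1
    have hγxynn : 0 ≤ γ (x * y) := by
      rw [hγ (x*y) ⟨mul_pos hx0 hy0, by nlinarith [hy.2]⟩]; positivity
    have hfnn : 0 ≤ f y := by
      apply div_nonneg hγxynn
      positivity
    rw [Real.norm_eq_abs, abs_of_nonneg hfnn]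
    exact hbound y hy
  -- compare integrals
  have hcomp : (∫ y in (0:ℝ)..(1/2), f y) ≤ ∫ y in (0:ℝ)..(1/2), g y := by
    apply integral_mono_on (by norm_num) hfint hgint
    intro y hy
    rcases eq_or_lt_of_le hy.1 with h0 | h0
    · -- y = 0 case
      subst h0
      simp only [hf, hg]
      rw [mul_zero, zero_mul, div_zero, Real.zero_rpow (by linarith : α/2 - 1 ≠ 0), mul_zero]
    · exact hbound y ⟨h0, hy.2⟩
  have hgval : (∫ y in (0:ℝ)..(1/2), g y) = (I / Real.sqrt (Real.log 2)) * γ x := by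
    rw [hg]
    rw [intervalIntegral.integral_const_mul]
    rw [← hI]
    field_simp
  calc (∫ y in (0:ℝ)..(1/2), γ (x * y) / (y * Real.sqrt (Real.log (1/y))))
      = ∫ y in (0:ℝ)..(1/2), f y := rfl
    _ ≤ ∫ y in (0:ℝ)..(1/2), g y := hcomp
    _ = (I / Real.sqrt (Real.log 2)) * γ x := hgval
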